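/- Let ⊗ be a continuous t-norm with residuum ⇒, and consider fuzzy ALC semantics as above extended with a binary concept constructor min(C, D) interpreted pointwise by the minimum: (min(C,D))^I(x) = min(C^I(x), D^I(x)). Let K be a fuzzy knowledge base, C and D concepts, and A an atomic concept occurring neither in K nor in C nor in D. Then K ∪ {⟨C ⊑ D ≥ 1⟩} is satisfiable iff K ∪ {⟨C ⊑ min(A, D) ≥ 1⟩, ⟨min(A, D) ⊑ C ≥ 1⟩} is satisfiable; moreover the same equivalence holds for satisfiability in interpretations with finite domain, and for satisfiability in witnessed interpretations. -/

import Mathlib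

/-- ALC concepts over countably many atomic concepts and role names. -/
inductive GConcept : Type where
  | atom : ℕ → GConcept
  | top  : GConcept
  | bot  : GConcept
  | conj : GConcept → GConcept → GConcept
  | disj : GConcept → GConcept → GConcept
  | neg  : GConcept → GConcept
  | minc : GConcept → GConcept → GConcept
  | all  : ℕ → GConcept → GConcept
  | ex   : ℕ → GConcept → GConcept
deriving DecidableEq

/-- `f` is a continuous t-norm (on `[0,1]`, coded as a function on `ℝ`). -/
def IsContinuousTnorm (f : ℝ → ℝ → ℝ) : Prop :=
  (∀ x ∈ Set.Icc (0:ℝ) 1, ∀ y ∈ Set.Icc (0:ℝ) 1, f x y ∈ Set.Icc (0:ℝ) 1) ∧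
  (∀ x ∈ Set.Icc (0:ℝ) 1, ∀ y ∈ Set.Icc (0:ℝ) 1, f x y = f y x) ∧
  (∀ x ∈ Set.Icc (0:ℝ) 1, ∀ y ∈ Set.Icc (0:ℝ) 1, ∀ z ∈ Set.Icc (0:ℝ) 1,
    f (f x y) z = f x (f y z)) ∧
  (∀ x ∈ Set.Icc (0:ℝ) 1, ∀ x' ∈ Set.Icc (0:ℝ) 1, ∀ y ∈ Set.Icc (0:ℝ) 1,
    ∀ y' ∈ Set.Icc (0:ℝ) 1, x ≤ x' → y ≤ y' → f x y ≤ f x' y') ∧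
  (∀ x ∈ Set.Icc (0:ℝ) 1, f x 1 = x) ∧
  ContinuousOn (fun p : ℝ × ℝ => f p.1 p.2) (Set.Icc (0:ℝ) 1 ×ˢ Set.Icc (0:ℝ) 1)

/-- The residuum `x ⇒ y = sup {z ∈ [0,1] : f x z ≤ y}` of `f`. -/
noncomputable def res (f : ℝ → ℝ → ℝ) (x y : ℝ) : ℝ :=
  sSup {z ∈ Set.Icc (0:ℝ) 1 | f x z ≤ y}

/-- A fuzzy interpretation. -/
structure Interp : Type 1 where
  Δ : Type
  nonempty : Nonempty Δ
  atom : ℕ → Δ → ℝ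
  role : ℕ → Δ → Δ → ℝ
  ind : ℕ → Δ
  atom_mem : ∀ i x, atom i x ∈ Set.Icc (0:ℝ) 1
  role_mem : ∀ j x y, role j x y ∈ Set.Icc (0:ℝ) 1

/-- Value of a concept at a point, where `⊓`/`∃` are interpreted via the t-norm `f`,
`∀` via the residuum of `f`, `⊔` via `e` and `¬` via `n`. -/
noncomputable def gval (f e : ℝ → ℝ → ℝ) (n : ℝ → ℝ) (I : Interp) :
    GConcept → I.Δ → ℝ
  | GConcept.atom i, x => I.atom i x
  | GConcept.top, _ => 1
  | GConcept.bot, _ => 0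
  | GConcept.conj C D, x => f (gval f e n I C x) (gval f e n I D x)
  | GConcept.disj C D, x => e (gval f e n I C x) (gval f e n I D x)
  | GConcept.neg C, x => n (gval f e n I C x)
  | GConcept.minc C D, x => min (gval f e n I C x) (gval f e n I D x)
  | GConcept.all j C, x => ⨅ y, res f (I.role j x y) (gval f e n I C y)
  | GConcept.ex j C, x => ⨆ y, f (I.role j x y) (gval f e n I C y)

/-- Degree of subsumption `(C ⊑ D)^I`. -/
noncomputable def gsub (f e : ℝ → ℝ → ℝ) (n : ℝ → ℝ) (I : Interp) (C D : GConcept) : ℝ :=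
  ⨅ x, res f (gval f e n I C x) (gval f e n I D x)

/-- Axioms of fuzzy knowledge bases. -/
inductive KAxiom : Type where
  | assertGE : ℕ → GConcept → ℚ → KAxiom
  | assertLE : ℕ → GConcept → ℚ → KAxiom
  | roleGE : ℕ → ℕ → ℕ → ℚ → KAxiom
  | gci : GConcept → GConcept → ℚ → KAxiom
deriving DecidableEq

/-- The rational constant of an axiom lies in `[0,1]`. -/
def axBounded : KAxiom → Prop
  | KAxiom.assertGE _ _ q => 0 ≤ q ∧ q ≤ 1
  | KAxiom.assertLE _ _ q => 0 ≤ q ∧ q ≤ 1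
  | KAxiom.roleGE _ _ _ q => 0 ≤ q ∧ q ≤ 1
  | KAxiom.gci _ _ q => 0 ≤ q ∧ q ≤ 1

/-- Satisfaction of an axiom in an interpretation. -/
def gsat (f e : ℝ → ℝ → ℝ) (n : ℝ → ℝ) (I : Interp) : KAxiom → Prop
  | KAxiom.assertGE a C q => (q : ℝ) ≤ gval f e n I C (I.ind a)
  | KAxiom.assertLE a C q => gval f e n I C (I.ind a) ≤ (q : ℝ)
  | KAxiom.roleGE a b j q => (q : ℝ) ≤ I.role j (I.ind a) (I.ind b)
  | KAxiom.gci C D q => (q : ℝ) ≤ gsub f e n I C D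

/-- Satisfaction of a set of axioms. -/
def gsatKB (f e : ℝ → ℝ → ℝ) (n : ℝ → ℝ) (I : Interp) (K : Finset KAxiom) : Prop :=
  ∀ ax ∈ K, gsat f e n I ax

/-- Witnessed interpretation: all the relevant infima and suprema are attained. -/
def gWitnessed (f e : ℝ → ℝ → ℝ) (n : ℝ → ℝ) (I : Interp) : Prop :=
  ∀ (C D : GConcept) (j : ℕ) (x : I.Δ),
    (∃ y, gval f e n I (GConcept.ex j C) x = f (I.role j x y) (gval f e n I C y)) ∧
    (∃ y, gval f e n I (GConcept.all j C) x = res f (I.role j x y) (gval f e n I C y)) ∧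
    (∃ y, gsub f e n I C D = res f (gval f e n I C y) (gval f e n I D y))

/-- The atomic concept `A_i` occurs in a concept. -/
def occursC (i : ℕ) : GConcept → Prop
  | GConcept.atom i' => i = i'
  | GConcept.top => False
  | GConcept.bot => False
  | GConcept.conj C D => occursC i C ∨ occursC i D
  | GConcept.disj C D => occursC i C ∨ occursC i D
  | GConcept.neg C => occursC i C
  | GConcept.minc C D => occursC i C ∨ occursC i D
  | GConcept.all _ C => occursC i C
  | GConcept.ex _ C => occursC i C

/-- The atomic concept `A_i` occurs in an axiom. -/
def occursA (i : ℕ) : KAxiom → Prop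
  | KAxiom.assertGE _ C _ => occursC i C
  | KAxiom.assertLE _ C _ => occursC i C
  | KAxiom.roleGE _ _ _ _ => False
  | KAxiom.gci C D _ => occursC i C ∨ occursC i D

section Stmt16Aux

variable {f : ℝ → ℝ → ℝ} {x y : ℝ}

lemma resSet_bddAbove (f : ℝ → ℝ → ℝ) (x y : ℝ) :
    BddAbove {z ∈ Set.Icc (0:ℝ) 1 | f x z ≤ y} :=
  ⟨1, fun _ hz => hz.1.2⟩

lemma tnorm_zero (hf : IsContinuousTnorm f) (hx : x ∈ Set.Icc (0:ℝ) 1) :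
    f x 0 = 0 := by
  have h0 : (0:ℝ) ∈ Set.Icc (0:ℝ) 1 := ⟨le_refl 0, zero_le_one⟩
  have h1 : (1:ℝ) ∈ Set.Icc (0:ℝ) 1 := ⟨zero_le_one, le_refl 1⟩
  have hle : f x 0 ≤ f 1 0 := hf.2.2.2.1 x hx 1 h1 0 h0 0 h0 hx.2 le_rfl
  have he : f 1 0 = 0 := by rw [hf.2.1 1 h1 0 h0, hf.2.2.2.2.1 0 h0]
  exact le_antisymm (hle.trans_eq he) (hf.1 x hx 0 h0).1

lemma zero_mem_resSet (hf : IsContinuousTnorm f) (hx : x ∈ Set.Icc (0:ℝ) 1)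
    (hy : 0 ≤ y) : (0:ℝ) ∈ {z ∈ Set.Icc (0:ℝ) 1 | f x z ≤ y} :=
  ⟨⟨le_rfl, zero_le_one⟩, by rw [tnorm_zero hf hx]; exact hy⟩

lemma res_mem (hf : IsContinuousTnorm f) (hx : x ∈ Set.Icc (0:ℝ) 1) (hy : 0 ≤ y) :
    res f x y ∈ Set.Icc (0:ℝ) 1 :=
  ⟨le_csSup (resSet_bddAbove f x y) (zero_mem_resSet hf hx hy),
   csSup_le ⟨0, zero_mem_resSet hf hx hy⟩ fun _ hz => hz.1.2⟩

lemma one_le_res (hf : IsContinuousTnorm f) (hx : x ∈ Set.Icc (0:ℝ) 1)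
    (hxy : x ≤ y) : 1 ≤ res f x y :=
  le_csSup (resSet_bddAbove f x y)
    ⟨⟨zero_le_one, le_rfl⟩, by rw [hf.2.2.2.2.1 x hx]; exact hxy⟩

lemma le_of_one_le_res (hf : IsContinuousTnorm f) (hx : x ∈ Set.Icc (0:ℝ) 1)
    (hy : y ∈ Set.Icc (0:ℝ) 1) (h : 1 ≤ res f x y) : x ≤ y := by
  have hc : ContinuousOn (fun z : ℝ => f x z) (Set.Icc 0 1) := by
    have hp : ContinuousOn (fun z : ℝ => ((x, z) : ℝ × ℝ)) (Set.Icc 0 1) :=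
      (continuous_const.prodMk continuous_id).continuousOn
    exact hf.2.2.2.2.2.comp hp fun z hz => ⟨hx, hz⟩
  have hclosed : IsClosed {z ∈ Set.Icc (0:ℝ) 1 | f x z ≤ y} := by
    exact hc.preimage_isClosed_of_isClosed isClosed_Icc (isClosed_Iic (a := y))
  have hmemS : res f x y ∈ {z ∈ Set.Icc (0:ℝ) 1 | f x z ≤ y} :=
    hclosed.csSup_mem ⟨0, zero_mem_resSet hf hx hy.1⟩ (resSet_bddAbove f x y)
  have h1 : res f x y = 1 := le_antisymm (res_mem hf hx hy.1).2 h
  have := hmemS.2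
  rw [h1, hf.2.2.2.2.1 x hx] at this
  exact this

lemma gval_mem (hf : IsContinuousTnorm f) (e : ℝ → ℝ → ℝ) (n : ℝ → ℝ)
    (he : ∀ x ∈ Set.Icc (0:ℝ) 1, ∀ y ∈ Set.Icc (0:ℝ) 1, e x y ∈ Set.Icc (0:ℝ) 1)
    (hn : ∀ x ∈ Set.Icc (0:ℝ) 1, n x ∈ Set.Icc (0:ℝ) 1) (I : Interp) :
    ∀ (E : GConcept) (x : I.Δ), gval f e n I E x ∈ Set.Icc (0:ℝ) 1 := by
  intro E
  induction E with
  | atom j => exact fun x => I.atom_mem j x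
  | top => exact fun _ => ⟨zero_le_one, le_rfl⟩
  | bot => exact fun _ => ⟨le_rfl, zero_le_one⟩
  | conj E F ihE ihF => intro x; exact hf.1 _ (ihE x) _ (ihF x)
  | disj E F ihE ihF => intro x; exact he _ (ihE x) _ (ihF x)
  | neg E ihE => intro x; exact hn _ (ihE x)
  | minc E F ihE ihF =>
      intro x
      exact ⟨le_min (ihE x).1 (ihF x).1, min_le_of_left_le (ihE x).2⟩
  | all j E ih =>
      intro x
      haveI := I.nonempty
      obtain ⟨y0⟩ := I.nonempty
      have hbdd : BddBelow (Set.range fun y => res f (I.role j x y) (gval f e n I E y)) :=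
        ⟨0, by rintro r ⟨y, rfl⟩; exact (res_mem hf (I.role_mem j x y) (ih y).1).1⟩
      exact ⟨le_ciInf fun y => (res_mem hf (I.role_mem j x y) (ih y).1).1,
        le_trans (ciInf_le hbdd y0) (res_mem hf (I.role_mem j x y0) (ih y0).1).2⟩
  | ex j E ih =>
      intro x
      haveI := I.nonempty
      obtain ⟨y0⟩ := I.nonempty
      have hbdd : BddAbove (Set.range fun y => f (I.role j x y) (gval f e n I E y)) :=
        ⟨1, by rintro r ⟨y, rfl⟩; exact (hf.1 _ (I.role_mem j x y) _ (ih y)).2⟩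
      exact ⟨le_trans (hf.1 _ (I.role_mem j x y0) _ (ih y0)).1 (le_ciSup hbdd y0),
        ciSup_le fun y => (hf.1 _ (I.role_mem j x y) _ (ih y)).2⟩

/-- Substitute concept `C` for the atomic concept `A_i`. -/
def substA (i : ℕ) (C : GConcept) : GConcept → GConcept
  | GConcept.atom j => if j = i then C else GConcept.atom j
  | GConcept.top => GConcept.top
  | GConcept.bot => GConcept.bot
  | GConcept.conj E F => GConcept.conj (substA i C E) (substA i C F)
  | GConcept.disj E F => GConcept.disj (substA i C E) (substA i C F)
  | GConcept.neg E => GConcept.neg (substA i C E)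
  | GConcept.minc E F => GConcept.minc (substA i C E) (substA i C F)
  | GConcept.all j E => GConcept.all j (substA i C E)
  | GConcept.ex j E => GConcept.ex j (substA i C E)

lemma substA_of_not_occurs {i : ℕ} {C : GConcept} :
    ∀ {E : GConcept}, ¬ occursC i E → substA i C E = E := by
  intro E
  induction E with
  | atom j =>
      intro h
      simp only [occursC] at h
      have hji : ¬ j = i := fun hji => h hji.symm
      simp only [substA, if_neg hji]
  | top => intro _; rfl
  | bot => intro _; rfl
  | conj E F ihE ihF =>
      intro h
      simp only [occursC, not_or] at h
      simp only [substA, ihE h.1, ihF h.2]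
  | disj E F ihE ihF =>
      intro h
      simp only [occursC, not_or] at h
      simp only [substA, ihE h.1, ihF h.2]
  | neg E ihE =>
      intro h
      simp only [substA, ihE h]
  | minc E F ihE ihF =>
      intro h
      simp only [occursC, not_or] at h
      simp only [substA, ihE h.1, ihF h.2]
  | all j E ihE => intro h; simp only [substA, ihE h]
  | ex j E ihE => intro h; simp only [substA, ihE h]

/-- Modify an interpretation at the atomic concept `A_i`. -/
def modAtom (I : Interp) (i : ℕ) (g : I.Δ → ℝ)
    (hg : ∀ x, g x ∈ Set.Icc (0:ℝ) 1) : Interp where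
  Δ := I.Δ
  nonempty := I.nonempty
  atom := fun j x => if j = i then g x else I.atom j x
  role := I.role
  ind := I.ind
  atom_mem := fun j x => by
    show (if j = i then g x else I.atom j x) ∈ Set.Icc (0:ℝ) 1
    split
    · exact hg x
    · exact I.atom_mem j x
  role_mem := I.role_mem

lemma gval_modAtom (f e : ℝ → ℝ → ℝ) (n : ℝ → ℝ) (I : Interp) (i : ℕ) (C : GConcept)
    (hg : ∀ x, gval f e n I C x ∈ Set.Icc (0:ℝ) 1) :
    ∀ (E : GConcept) (x : I.Δ),
      gval f e n (modAtom I i (fun y => gval f e n I C y) hg) E x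
        = gval f e n I (substA i C E) x := by
  intro E
  induction E with
  | atom j =>
      intro x
      by_cases hji : j = i <;> simp [gval, substA, modAtom, hji]
  | top => intro x; rfl
  | bot => intro x; rfl
  | conj E F ihE ihF => intro x; simp only [gval, substA, ihE, ihF]
  | disj E F ihE ihF => intro x; simp only [gval, substA, ihE, ihF]
  | neg E ihE => intro x; simp only [gval, substA, ihE]
  | minc E F ihE ihF => intro x; simp only [gval, substA, ihE, ihF]
  | all j E ihE =>
      intro x
      simp only [gval, substA, ihE]
      exact iInf_congr fun y => congrArg (res f (I.role j x y)) (ihE y)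
  | ex j E ihE =>
      intro x
      simp only [gval, substA, ihE]
      exact iSup_congr fun y => congrArg (f (I.role j x y)) (ihE y)

lemma gsub_modAtom (f e : ℝ → ℝ → ℝ) (n : ℝ → ℝ) (I : Interp) (i : ℕ) (C : GConcept)
    (hg : ∀ x, gval f e n I C x ∈ Set.Icc (0:ℝ) 1) (E F : GConcept) :
    gsub f e n (modAtom I i (fun y => gval f e n I C y) hg) E F
      = gsub f e n I (substA i C E) (substA i C F) := by
  unfold gsub
  exact iInf_congr fun x => by
    rw [gval_modAtom f e n I i C hg E x, gval_modAtom f e n I i C hg F x]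

end Stmt16Aux

theorem stmt16 (f : ℝ → ℝ → ℝ) (hf : IsContinuousTnorm f)
    (e : ℝ → ℝ → ℝ) (n : ℝ → ℝ)
    (he : ∀ x ∈ Set.Icc (0:ℝ) 1, ∀ y ∈ Set.Icc (0:ℝ) 1, e x y ∈ Set.Icc (0:ℝ) 1)
    (hn : ∀ x ∈ Set.Icc (0:ℝ) 1, n x ∈ Set.Icc (0:ℝ) 1)
    (K : Finset KAxiom) (hKb : ∀ ax ∈ K, axBounded ax)
    (C D : GConcept) (i : ℕ)
    (hK : ∀ ax ∈ K, ¬ occursA i ax) (hC : ¬ occursC i C) (hD : ¬ occursC i D) :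
    ((∃ I : Interp, gsatKB f e n I (insert (KAxiom.gci C D 1) K)) ↔
     (∃ I : Interp, gsatKB f e n I
        (insert (KAxiom.gci C (GConcept.minc (GConcept.atom i) D) 1)
          (insert (KAxiom.gci (GConcept.minc (GConcept.atom i) D) C 1) K)))) ∧
    ((∃ I : Interp, Finite I.Δ ∧ gsatKB f e n I (insert (KAxiom.gci C D 1) K)) ↔
     (∃ I : Interp, Finite I.Δ ∧ gsatKB f e n I
        (insert (KAxiom.gci C (GConcept.minc (GConcept.atom i) D) 1)
          (insert (KAxiom.gci (GConcept.minc (GConcept.atom i) D) C 1) K)))) ∧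
    ((∃ I : Interp, gWitnessed f e n I ∧ gsatKB f e n I (insert (KAxiom.gci C D 1) K)) ↔
     (∃ I : Interp, gWitnessed f e n I ∧ gsatKB f e n I
        (insert (KAxiom.gci C (GConcept.minc (GConcept.atom i) D) 1)
          (insert (KAxiom.gci (GConcept.minc (GConcept.atom i) D) C 1) K)))) := by
    classical
  set A := GConcept.atom i with hA
  set M := GConcept.minc (GConcept.atom i) D with hM
  -- membership of values
  have gm : ∀ (I : Interp) (E : GConcept) (x : I.Δ), gval f e n I E x ∈ Set.Icc (0:ℝ) 1 :=
    fun I => gval_mem hf e n he hn I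
  -- from `1 ≤ gsub I E F` we get pointwise `≤`
  have sub_le : ∀ (I : Interp) (E F : GConcept), (1:ℝ) ≤ gsub f e n I E F →
      ∀ x : I.Δ, gval f e n I E x ≤ gval f e n I F x := by
    intro I E F h x
    haveI := I.nonempty
    have hbdd : BddBelow (Set.range fun x => res f (gval f e n I E x) (gval f e n I F x)) :=
      ⟨0, by rintro r ⟨x, rfl⟩; exact (res_mem hf (gm I E x) (gm I F x).1).1⟩
    exact le_of_one_le_res hf (gm I E x) (gm I F x)
      (le_trans h (ciInf_le hbdd x))
  -- converse: pointwise `≤` gives `1 ≤ gsub`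
  have le_sub : ∀ (I : Interp) (E F : GConcept),
      (∀ x : I.Δ, gval f e n I E x ≤ gval f e n I F x) → (1:ℝ) ≤ gsub f e n I E F := by
    intro I E F h
    haveI := I.nonempty
    exact le_ciInf fun x => one_le_res hf (gm I E x) (h x)
  -- backward direction: the same interpretation works
  have back : ∀ I : Interp,
      gsatKB f e n I (insert (KAxiom.gci C M 1) (insert (KAxiom.gci M C 1) K)) →
      gsatKB f e n I (insert (KAxiom.gci C D 1) K) := by
    intro I hsat ax hax
    rcases Finset.mem_insert.mp hax with rfl | haxK
    · have h1 : (1:ℝ) ≤ gsub f e n I C M := by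
        have := hsat _ (Finset.mem_insert_self _ _)
        simpa [gsat] using this
      have h2 : ∀ x : I.Δ, gval f e n I C x ≤ gval f e n I D x := by
        intro x
        refine le_trans (sub_le I C M h1 x) ?_
        rw [hM]
        simpa [gval] using min_le_right (gval f e n I A x) (gval f e n I D x)
      show gsat f e n I (KAxiom.gci C D 1)
      simpa [gsat] using le_sub I C D h2
    · exact hsat ax (by simp [Finset.mem_insert, haxK])
  -- forward direction: modify the interpretation at `A_i`
  have fwd_sat : ∀ I : Interp, gsatKB f e n I (insert (KAxiom.gci C D 1) K) →
      gsatKB f e n (modAtom I i (fun y => gval f e n I C y) (gm I C))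
        (insert (KAxiom.gci C M 1) (insert (KAxiom.gci M C 1) K)) := by
    intro I hsat
    have hCD : ∀ x : I.Δ, gval f e n I C x ≤ gval f e n I D x := by
      refine sub_le I C D ?_
      have := hsat _ (Finset.mem_insert_self _ _)
      simpa [gsat] using this
    have hsubC : substA i C C = C := substA_of_not_occurs hC
    have hsubD : substA i C D = D := substA_of_not_occurs hD
    have hvC : ∀ x : I.Δ, gval f e n (modAtom I i (fun y => gval f e n I C y) (gm I C)) C x = gval f e n I C x := by
      intro x; rw [gval_modAtom f e n I i C (gm I C) C x, hsubC]
    have hvM : ∀ x : I.Δ, gval f e n (modAtom I i (fun y => gval f e n I C y) (gm I C)) M x = gval f e n I C x := by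
      intro x
      rw [gval_modAtom f e n I i C (gm I C) M x]
      have : substA i C M = GConcept.minc C D := by
        simp [hM, substA, hsubD]
      rw [this]
      simp [gval, min_eq_left (hCD x)]
    intro ax hax
    rcases Finset.mem_insert.mp hax with rfl | hax2
    · show gsat f e n (modAtom I i (fun y => gval f e n I C y) (gm I C)) (KAxiom.gci C M 1)
      simp only [gsat, Rat.cast_one]
      refine le_sub _ C M fun x => ?_
      rw [hvC x, hvM x]
    · rcases Finset.mem_insert.mp hax2 with rfl | haxK
      · show gsat f e n (modAtom I i (fun y => gval f e n I C y) (gm I C)) (KAxiom.gci M C 1)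
        simp only [gsat, Rat.cast_one]
        refine le_sub _ M C fun x => ?_
        rw [hvC x, hvM x]
      · -- axioms of K are unaffected
        have hno : ¬ occursA i ax := hK ax haxK
        have hax' := hsat ax (Finset.mem_insert_of_mem haxK)
        cases ax with
        | assertGE a C' q =>
            have : ¬ occursC i C' := hno
            show (q:ℝ) ≤ gval f e n (modAtom I i (fun y => gval f e n I C y) (gm I C)) C' (I.ind a)
            rw [gval_modAtom f e n I i C (gm I C) C' (I.ind a),
              substA_of_not_occurs this]
            exact hax'
        | assertLE a C' q =>
            have : ¬ occursC i C' := hno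
            show gval f e n (modAtom I i (fun y => gval f e n I C y) (gm I C)) C' (I.ind a) ≤ (q:ℝ)
            rw [gval_modAtom f e n I i C (gm I C) C' (I.ind a),
              substA_of_not_occurs this]
            exact hax'
        | roleGE a b j q => exact hax'
        | gci C' D' q =>
            have hnc : ¬ occursC i C' := fun h => hno (Or.inl h)
            have hnd : ¬ occursC i D' := fun h => hno (Or.inr h)
            show (q:ℝ) ≤ gsub f e n (modAtom I i (fun y => gval f e n I C y) (gm I C)) C' D'
            rw [gsub_modAtom f e n I i C (gm I C) C' D',
              substA_of_not_occurs hnc, substA_of_not_occurs hnd]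
            exact hax'
  -- witnessedness transfers to the modified interpretation
  have fwd_wit : ∀ I : Interp, gWitnessed f e n I →
      gWitnessed f e n (modAtom I i (fun y => gval f e n I C y) (gm I C)) := by
    intro I hw C' D' j x
    obtain ⟨⟨y1, h1⟩, ⟨y2, h2⟩, ⟨y3, h3⟩⟩ := hw (substA i C C') (substA i C D') j x
    refine ⟨⟨y1, ?_⟩, ⟨y2, ?_⟩, ⟨y3, ?_⟩⟩
    · rw [gval_modAtom f e n I i C (gm I C) (GConcept.ex j C') x,
        gval_modAtom f e n I i C (gm I C) C' y1]
      simpa [substA, modAtom] using h1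
    · rw [gval_modAtom f e n I i C (gm I C) (GConcept.all j C') x,
        gval_modAtom f e n I i C (gm I C) C' y2]
      simpa [substA, modAtom] using h2
    · rw [gsub_modAtom f e n I i C (gm I C) C' D',
        gval_modAtom f e n I i C (gm I C) C' y3,
        gval_modAtom f e n I i C (gm I C) D' y3]
      exact h3
  refine ⟨⟨?_, ?_⟩, ⟨?_, ?_⟩, ⟨?_, ?_⟩⟩
  · rintro ⟨I, hI⟩
    exact ⟨modAtom I i (fun y => gval f e n I C y) (gm I C), fwd_sat I hI⟩
  · rintro ⟨I, hI⟩
    exact ⟨I, back I hI⟩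
  · rintro ⟨I, hfin, hI⟩
    exact ⟨modAtom I i (fun y => gval f e n I C y) (gm I C), hfin, fwd_sat I hI⟩
  · rintro ⟨I, hfin, hI⟩
    exact ⟨I, hfin, back I hI⟩
  · rintro ⟨I, hwit, hI⟩
    exact ⟨modAtom I i (fun y => gval f e n I C y) (gm I C), fwd_wit I hwit, fwd_sat I hI⟩
  · rintro ⟨I, hwit, hI⟩
    exact ⟨I, hwit, back I hI⟩
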